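/- Let q > 1 and 0 < u < 1 be real numbers. For a partition λ, let λ'_i denote the i-th part of the conjugate partition (with λ'_i = 0 for i exceeding the largest part λ₁ of λ), and define M_{GL,u,q}(λ) = ∏_{r=1}^∞ (1 − u/q^r) · u^{|λ|}/(q^{∑_i (λ'_i)²} ∏_{i≥1} (1/q)_{m_i(λ)}), P(a) = u^a ∏_{r=1}^∞(1 − u/q^r) / (q^{a²} (1/q)_a (u/q)_a), and K(a,b) = u^b (1/q)_a (u/q)_a / (q^{b²} (1/q)_{a−b} (1/q)_b (u/q)_b) for 0 ≤ b ≤ a. Then for every partition λ and every integer L ≥ λ₁, M_{GL,u,q}(λ) = P(λ'_1) · ∏_{i=1}^{L} K(λ'_i, λ'_{i+1}). -/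
import Mathlib


/-- `(x)_m = ∏_{j=1}^m (1 − x·q^{−j})`. -/
noncomputable def qPoch (q x : ℝ) (m : ℕ) : ℝ := ∏ j ∈ Finset.range m, (1 - x * q⁻¹ ^ (j + 1))

/-- `λ'_i`, the `i`-th part of the conjugate partition: the number of parts of `λ` of size
at least `i` (zero for `i` exceeding the largest part). -/
def conjPart {n : ℕ} (lam : Nat.Partition n) (i : ℕ) : ℕ :=
  (lam.parts.filter (fun j => i ≤ j)).card

/-- The measure `M_{GL,u,q}(λ) = ∏_{r=1}^∞ (1 − u/q^r) · u^{|λ|}/(q^{∑ᵢ(λ'ᵢ)²} ∏ᵢ (1/q)_{mᵢ(λ)})`. -/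
noncomputable def MGL (q u : ℝ) {n : ℕ} (lam : Nat.Partition n) : ℝ :=
  (∏' r : ℕ, (1 - u / q ^ (r + 1))) * u ^ n /
    (q ^ (∑ i ∈ Finset.Icc 1 n, (conjPart lam i) ^ 2) *
      ∏ i ∈ Finset.Icc 1 n, qPoch q 1 (Multiset.count i lam.parts))

/-- `P(a) = u^a ∏_{r=1}^∞(1 − u/q^r) / (q^{a²} (1/q)_a (u/q)_a)`. -/
noncomputable def firstColumnP (q u : ℝ) (a : ℕ) : ℝ :=
  u ^ a * (∏' r : ℕ, (1 - u / q ^ (r + 1))) / (q ^ (a ^ 2) * qPoch q 1 a * qPoch q u a)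

/-- The transition probability `K(a,b)` of the Markov chain associated to `M_{GL,u,q}`. -/
noncomputable def markovK (q u : ℝ) (a b : ℕ) : ℝ :=
  u ^ b * qPoch q 1 a * qPoch q u a /
    (q ^ (b ^ 2) * qPoch q 1 (a - b) * qPoch q 1 b * qPoch q u b)

lemma qPoch_pos {q x : ℝ} (hq : 1 < q) (hx0 : 0 ≤ x) (hx1 : x ≤ 1) (m : ℕ) :
    0 < qPoch q x m := by
  apply Finset.prod_pos
  intro j _
  have hq0 : (0:ℝ) < q := lt_trans one_pos hq
  have h2 : (0:ℝ) ≤ q⁻¹ := by positivity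
  have h1 : q⁻¹ < 1 := by
    rw [inv_lt_one_iff₀]; right; exact hq
  have ht : q⁻¹ ^ (j+1) < 1 := pow_lt_one₀ h2 h1 (Nat.succ_ne_zero j)
  nlinarith [pow_nonneg h2 (j+1)]

lemma conjPart_succ_add_count {n : ℕ} (lam : Nat.Partition n) (i : ℕ) :
    conjPart lam i = conjPart lam (i+1) + Multiset.count i lam.parts := by
  unfold conjPart
  have h := Multiset.filter_add_filter (fun j => i + 1 ≤ j) (fun j => j = i) lam.parts
  have h1 : lam.parts.filter (fun j => (i+1 ≤ j) ∨ j = i) = lam.parts.filter (fun j => i ≤ j) := by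
    apply Multiset.filter_congr; intro x _; constructor <;> intro <;> omega
  have h2 : lam.parts.filter (fun j => (i+1 ≤ j) ∧ j = i) = 0 := by
    rw [Multiset.filter_eq_nil]; intro x _; omega
  rw [h1, h2, add_zero] at h
  have := congrArg Multiset.card h
  rw [Multiset.card_add] at this
  rw [← this, Multiset.count_eq_card_filter_eq]
  congr 2
  apply Multiset.filter_congr; intro x _; exact eq_comm

lemma conjPart_antitone {n : ℕ} (lam : Nat.Partition n) {i j : ℕ} (h : i ≤ j) :
    conjPart lam j ≤ conjPart lam i := by
  apply Multiset.card_le_card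
  apply Multiset.monotone_filter_right
  intro x hx; omega

lemma conjPart_eq_zero {n : ℕ} (lam : Nat.Partition n) {M i : ℕ}
    (hM : ∀ j ∈ lam.parts, j ≤ M) (hi : M < i) : conjPart lam i = 0 := by
  unfold conjPart
  rw [Multiset.card_eq_zero, Multiset.filter_eq_nil]
  intro x hx
  have := hM x hx; omega

lemma sum_card_filter (N : ℕ) (s : Multiset ℕ) (h : ∀ j ∈ s, j ≤ N) :
    ∑ i ∈ Finset.Icc 1 N, (s.filter (fun j => i ≤ j)).card = s.sum := by
  induction s using Multiset.induction with
  | empty => simp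
  | cons a s ih =>
    have ha : a ≤ N := h a (Multiset.mem_cons_self a s)
    have hs : ∀ j ∈ s, j ≤ N := fun j hj => h j (Multiset.mem_cons_of_mem hj)
    simp only [Multiset.filter_cons, Multiset.card_add, Finset.sum_add_distrib, ih hs,
      Multiset.sum_cons]
    congr 1
    have hcard : ∀ i : ℕ, Multiset.card (if i ≤ a then ({a} : Multiset ℕ) else 0) = if i ≤ a then 1 else 0 := by
      intro i; split <;> simp
    calc ∑ i ∈ Finset.Icc 1 N, Multiset.card (if i ≤ a then ({a} : Multiset ℕ) else 0)
        = ∑ i ∈ Finset.Icc 1 N, (if i ≤ a then 1 else 0) := by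
          apply Finset.sum_congr rfl; intro i _; split <;> simp
      _ = ((Finset.Icc 1 N).filter (fun i => i ≤ a)).card := by rw [Finset.card_filter]
      _ = (Finset.Icc 1 a).card := by
          congr 1; ext i; simp only [Finset.mem_filter, Finset.mem_Icc]; omega
      _ = a := by rw [Nat.card_Icc]; omega

lemma sum_conjPart {n : ℕ} (lam : Nat.Partition n) (N : ℕ) (hN : ∀ j ∈ lam.parts, j ≤ N) :
    ∑ i ∈ Finset.Icc 1 N, conjPart lam i = n := by
  unfold conjPart
  rw [sum_card_filter N lam.parts hN, lam.parts_sum]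


lemma prod_markovK (q u : ℝ) (hq : 1 < q) (hu0 : 0 < u) (hu1 : u < 1)
    (a : ℕ → ℕ) (N : ℕ) :
    ∏ i ∈ Finset.Icc 1 N, markovK q u (a i) (a (i+1)) =
      u ^ (∑ i ∈ Finset.Icc 1 N, a (i+1)) * qPoch q 1 (a 1) * qPoch q u (a 1) /
        (q ^ (∑ i ∈ Finset.Icc 1 N, (a (i+1))^2) *
          (∏ i ∈ Finset.Icc 1 N, qPoch q 1 (a i - a (i+1))) *
          qPoch q 1 (a (N+1)) * qPoch q u (a (N+1))) := by
  have hq0 : (0:ℝ) < q := lt_trans one_pos hq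
  have hP1 : ∀ m, qPoch q 1 m ≠ 0 := fun m => (qPoch_pos hq zero_le_one le_rfl m).ne'
  have hPu : ∀ m, qPoch q u m ≠ 0 := fun m => (qPoch_pos hq hu0.le hu1.le m).ne'
  induction N with
  | zero =>
    have he : Finset.Icc 1 0 = (∅ : Finset ℕ) := rfl
    rw [he]
    simp only [Finset.prod_empty, Finset.sum_empty, pow_zero, one_mul, mul_one, Nat.zero_add]
    rw [eq_comm, div_eq_one_iff_eq (mul_ne_zero (hP1 _) (hPu _))]
  | succ N ih =>
    rw [Finset.prod_Icc_succ_top (by omega), Finset.sum_Icc_succ_top (by omega),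
      Finset.sum_Icc_succ_top (by omega), Finset.prod_Icc_succ_top (by omega), ih]
    unfold markovK
    have h1 := hP1 (a 1); have h2 := hPu (a 1)
    have h3 := hP1 (a (N+1)); have h4 := hPu (a (N+1))
    have h5 := hP1 (a (N+2)); have h6 := hPu (a (N+2))
    have h7 := hP1 (a (N+1) - a (N+2))
    have h8 : ∀ i ∈ Finset.Icc 1 N, qPoch q 1 (a i - a (i+1)) ≠ 0 := fun i _ => hP1 _
    have h9 : (∏ i ∈ Finset.Icc 1 N, qPoch q 1 (a i - a (i+1))) ≠ 0 := Finset.prod_ne_zero_iff.mpr h8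
    have hqn : q ≠ 0 := hq0.ne'
    field_simp
    ring


/-- For `q > 1`, `0 < u < 1`, any partition `λ` and any `L` at least the largest part of `λ`,
`M_{GL,u,q}(λ) = P(λ'₁) · ∏_{i=1}^{L} K(λ'ᵢ, λ'_{i+1})`. -/
theorem MGL_eq_markov_chain (q u : ℝ) (hq : 1 < q) (hu0 : 0 < u) (hu1 : u < 1)
    {n : ℕ} (lam : Nat.Partition n) (L : ℕ) (hL : ∀ j ∈ lam.parts, j ≤ L) :
    MGL q u lam =
      firstColumnP q u (conjPart lam 1) *
        ∏ i ∈ Finset.Icc 1 L, markovK q u (conjPart lam i) (conjPart lam (i + 1)) := by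
  unfold MGL firstColumnP
  have hq0 : (0:ℝ) < q := lt_trans one_pos hq
  have hP1 : ∀ m, qPoch q 1 m ≠ 0 := fun m => (qPoch_pos hq zero_le_one le_rfl m).ne'
  have hPu : ∀ m, qPoch q u m ≠ 0 := fun m => (qPoch_pos hq hu0.le hu1.le m).ne'
  have hpn : ∀ j ∈ lam.parts, j ≤ n := fun j hj => by
    have h := Multiset.single_le_sum (fun x _ => Nat.zero_le x) j hj
    rwa [lam.parts_sum] at h
  have hK1 : ∀ i, conjPart lam i = 0 →
      markovK q u (conjPart lam i) (conjPart lam (i+1)) = 1 := by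
    intro i hi
    have h2 : conjPart lam (i+1) = 0 :=
      Nat.le_zero.mp (hi ▸ conjPart_antitone lam (Nat.le_succ i))
    rw [hi, h2]
    simp [markovK, qPoch]
  have key : ∀ M N : ℕ, M ≤ N → (∀ j ∈ lam.parts, j ≤ M) →
      ∏ i ∈ Finset.Icc 1 N, markovK q u (conjPart lam i) (conjPart lam (i+1)) =
      ∏ i ∈ Finset.Icc 1 M, markovK q u (conjPart lam i) (conjPart lam (i+1)) := by
    intro M N h hz
    symm
    apply Finset.prod_subset (Finset.Icc_subset_Icc_right h)
    intro x hx hnx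
    simp only [Finset.mem_Icc] at hx hnx
    exact hK1 x (conjPart_eq_zero lam hz (by omega))
  have hLn := (key L (max L n) (le_max_left _ _) hL).symm.trans
    (key n (max L n) (le_max_right _ _) hpn)
  rw [hLn, prod_markovK q u hq hu0 hu1 (conjPart lam) n]
  have han1 : conjPart lam (n+1) = 0 := conjPart_eq_zero lam hpn (by omega)
  have claim : ∀ g : ℕ → ℕ, g 1 + ∑ i ∈ Finset.Icc 1 n, g (i+1) =
      (∑ i ∈ Finset.Icc 1 n, g i) + g (n+1) := by
    intro g
    have h1 : ∑ i ∈ Finset.Icc 1 n, g (i+1) = ∑ i ∈ Finset.Icc 2 (n+1), g i := by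
      rw [← Finset.map_add_right_Icc 1 n 1, Finset.sum_map]
      rfl
    have h2 : ∑ i ∈ Finset.Icc 1 (n+1), g i = g 1 + ∑ i ∈ Finset.Ioc 1 (n+1), g i := by
      rw [Finset.Icc_eq_cons_Ioc (by omega), Finset.sum_cons]
    rw [h1, show (2:ℕ) = 1 + 1 from rfl, Finset.Icc_add_one_left_eq_Ioc, ← h2,
      Finset.sum_Icc_succ_top (by omega)]
  have hT : conjPart lam 1 + ∑ i ∈ Finset.Icc 1 n, conjPart lam (i+1) = n := by
    rw [claim (conjPart lam), sum_conjPart lam n hpn, han1]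
    omega
  have hS : (conjPart lam 1)^2 + ∑ i ∈ Finset.Icc 1 n, (conjPart lam (i+1))^2 =
      ∑ i ∈ Finset.Icc 1 n, (conjPart lam i)^2 := by
    rw [claim (fun i => (conjPart lam i)^2), han1]
    simp
  have hC : (∏ i ∈ Finset.Icc 1 n, qPoch q 1 (conjPart lam i - conjPart lam (i+1))) =
      ∏ i ∈ Finset.Icc 1 n, qPoch q 1 (Multiset.count i lam.parts) := by
    apply Finset.prod_congr rfl
    intro i _
    congr 1
    have := conjPart_succ_add_count lam i
    omega
  rw [han1, hC]
  have hq1 : qPoch q 1 0 = 1 := by simp [qPoch]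
  have hqu : qPoch q u 0 = 1 := by simp [qPoch]
  rw [hq1, hqu]
  have hun : u ^ n = u ^ (conjPart lam 1) * u ^ (∑ i ∈ Finset.Icc 1 n, conjPart lam (i+1)) := by
    rw [← pow_add, hT]
  have hqS : q ^ (∑ i ∈ Finset.Icc 1 n, (conjPart lam i)^2) =
      q ^ ((conjPart lam 1)^2) * q ^ (∑ i ∈ Finset.Icc 1 n, (conjPart lam (i+1))^2) := by
    rw [← pow_add, hS]
  rw [hun, hqS]
  have h9 : (∏ i ∈ Finset.Icc 1 n, qPoch q 1 (Multiset.count i lam.parts)) ≠ 0 :=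
    Finset.prod_ne_zero_iff.mpr (fun i _ => hP1 _)
  have hqn : q ≠ 0 := hq0.ne'
  rw [mul_one, mul_one, div_mul_div_comm, div_eq_div_iff
    (mul_ne_zero (mul_ne_zero (pow_ne_zero _ hqn) (pow_ne_zero _ hqn)) h9)
    (mul_ne_zero (mul_ne_zero (mul_ne_zero (pow_ne_zero _ hqn) (hP1 _)) (hPu _))
      (mul_ne_zero (pow_ne_zero _ hqn) h9))]
  ring
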